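/- (Deterministic stability of the ε-perturbed integral functional; workhorse of the consistency proofs.) Let θ > 0, ε > 0, V ≥ 0. Let f_n, f : [0,θ] → [0,∞) be nondecreasing right-continuous functions with f_n(0) = f(0) = 0 and sup_{t ∈ [0,θ]} |f_n(t) − f(t)| → 0. Let g_n, g : [0,θ] → [0,∞) be right-continuous functions with left limits whose total variations on [0,θ] are all bounded by V, and with sup_{t ∈ [0,θ]} |g_n(t) − g(t)| → 0. Then sup_{t ∈ [0,θ]} | ∫_{(0,t]} (g_n(s−) ∨ ε)^{−1} df_n(s) − ∫_{(0,t]} (g(s−) ∨ ε)^{−1} df(s) | → 0 as n → ∞, where the integrals are Lebesgue–Stieltjes integrals with respect to the measures induced by f_n and f, and g(s−) denotes the left limit at s. -/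

import Mathlib

open Set Filter MeasureTheory Topology

lemma phi_abs_sub {ε : ℝ} (hε : 0 < ε) (a b : ℝ) :
    |(max a ε)⁻¹ - (max b ε)⁻¹| ≤ ε⁻¹ * ε⁻¹ * |a - b| := by
  have ha : ε ≤ max a ε := le_max_right _ _
  have hb : ε ≤ max b ε := le_max_right _ _
  have ha0 : 0 < max a ε := lt_of_lt_of_le hε ha
  have hb0 : 0 < max b ε := lt_of_lt_of_le hε hb
  have h1 : |max b ε - max a ε| ≤ |a - b| := by
    have := abs_max_sub_max_le_abs b a ε
    rwa [abs_sub_comm a b]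
  have key : |(max a ε)⁻¹ - (max b ε)⁻¹| = |max b ε - max a ε| / ((max a ε) * (max b ε)) := by
    rw [inv_sub_inv ha0.ne' hb0.ne', abs_div, abs_of_pos (mul_pos ha0 hb0)]
  rw [key]
  calc |max b ε - max a ε| / ((max a ε) * (max b ε))
      ≤ |a - b| / (ε * ε) :=
        div_le_div₀ (abs_nonneg _) h1 (by positivity) (mul_le_mul ha hb hε.le (le_trans hε.le ha))
    _ = ε⁻¹ * ε⁻¹ * |a - b| := by rw [div_eq_mul_inv, mul_inv]; ring

lemma phi_continuous {ε : ℝ} (hε : 0 < ε) : Continuous (fun x : ℝ => (max x ε)⁻¹) :=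
  Continuous.inv₀ (continuous_id.max continuous_const)
    (fun _ => (lt_of_lt_of_le hε (le_max_right _ _)).ne')

lemma leftLim_rightLim_eq {M : ℝ → ℝ} (hM : Monotone M) (x : ℝ) :
    Function.leftLim (Function.rightLim M) x = Function.leftLim M x := by
  have h1 : Tendsto M (𝓝[<] x) (𝓝 (Function.leftLim M x)) := hM.tendsto_leftLim x
  have h2 : Tendsto (Function.rightLim M) (𝓝[<] x)
      (𝓝 (Function.leftLim (Function.rightLim M) x)) :=
    (hM.rightLim).tendsto_leftLim x
  apply le_antisymm
  · refine le_of_tendsto h2 ?_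
    filter_upwards [self_mem_nhdsWithin] with y hy
    exact hM.rightLim_le_leftLim hy
  · exact le_of_tendsto_of_tendsto' h1 h2 (fun y => hM.le_rightLim le_rfl)

lemma fubini_box (μ ρ : Measure ℝ) [IsFiniteMeasure μ] [IsFiniteMeasure ρ] (t : ℝ) :
    (∫⁻ x in Set.Ioc (0:ℝ) t, ρ (Set.Ioo 0 x) ∂μ)
      + (∫⁻ y in Set.Ioc (0:ℝ) t, μ (Set.Ioc 0 y) ∂ρ)
      = μ (Set.Ioc 0 t) * ρ (Set.Ioc 0 t) := by
  set sq : Set (ℝ × ℝ) := (Set.Ioc (0:ℝ) t) ×ˢ (Set.Ioc (0:ℝ) t) with hsq_def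
  have hsq : MeasurableSet sq := measurableSet_Ioc.prod measurableSet_Ioc
  have hlt : MeasurableSet {p : ℝ × ℝ | p.2 < p.1} :=
    measurableSet_lt measurable_snd measurable_fst
  have hle : MeasurableSet {p : ℝ × ℝ | p.1 ≤ p.2} :=
    measurableSet_le measurable_fst measurable_snd
  have h1 : (μ.prod ρ) (sq ∩ {p | p.2 < p.1})
      = ∫⁻ x in Set.Ioc (0:ℝ) t, ρ (Set.Ioo 0 x) ∂μ := by
    rw [Measure.prod_apply (hsq.inter hlt)]
    have : ∀ x : ℝ, ρ (Prod.mk x ⁻¹' (sq ∩ {p | p.2 < p.1}))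
        = (Set.Ioc (0:ℝ) t).indicator (fun x => ρ (Set.Ioo 0 x)) x := by
      intro x
      by_cases hx : x ∈ Set.Ioc (0:ℝ) t
      · rw [indicator_of_mem hx]
        congr 1
        ext y
        simp only [hsq_def, mem_preimage, mem_inter_iff, mem_prod, mem_setOf_eq, mem_Ioo,
          mem_Ioc]
        constructor
        · rintro ⟨⟨_, hy⟩, hlt⟩; exact ⟨hy.1, hlt⟩
        · rintro ⟨hy1, hy2⟩; exact ⟨⟨hx, hy1, le_trans hy2.le hx.2⟩, hy2⟩
      · rw [indicator_of_notMem hx]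
        have he : Prod.mk x ⁻¹' (sq ∩ {p | p.2 < p.1}) = ∅ := by
          ext y
          simp only [hsq_def, mem_preimage, mem_inter_iff, mem_prod, mem_setOf_eq,
            mem_empty_iff_false, iff_false, not_and]
          rintro ⟨hx', _⟩
          exact absurd hx' hx
        rw [he, measure_empty]
    rw [lintegral_congr this, lintegral_indicator measurableSet_Ioc]
  have h2 : (μ.prod ρ) (sq ∩ {p | p.1 ≤ p.2})
      = ∫⁻ y in Set.Ioc (0:ℝ) t, μ (Set.Ioc 0 y) ∂ρ := by
    rw [Measure.prod_apply_symm (hsq.inter hle)]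
    have : ∀ y : ℝ, μ ((fun x => (x, y)) ⁻¹' (sq ∩ {p | p.1 ≤ p.2}))
        = (Set.Ioc (0:ℝ) t).indicator (fun y => μ (Set.Ioc 0 y)) y := by
      intro y
      by_cases hy : y ∈ Set.Ioc (0:ℝ) t
      · rw [indicator_of_mem hy]
        congr 1
        ext x
        simp only [hsq_def, mem_preimage, mem_inter_iff, mem_prod, mem_setOf_eq, mem_Ioc]
        constructor
        · rintro ⟨⟨hx, _⟩, hle⟩; exact ⟨hx.1, hle⟩
        · rintro ⟨hx1, hx2⟩; exact ⟨⟨⟨hx1, le_trans hx2 hy.2⟩, hy⟩, hx2⟩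
      · rw [indicator_of_notMem hy]
        have he : (fun x => (x, y)) ⁻¹' (sq ∩ {p | p.1 ≤ p.2}) = ∅ := by
          ext x
          simp only [hsq_def, mem_preimage, mem_inter_iff, mem_prod, mem_setOf_eq,
            mem_empty_iff_false, iff_false, not_and]
          rintro ⟨_, hy'⟩
          exact absurd hy' hy
        rw [he, measure_empty]
    rw [lintegral_congr this, lintegral_indicator measurableSet_Ioc]
  have hdisj : Disjoint (sq ∩ {p : ℝ × ℝ | p.2 < p.1}) (sq ∩ {p : ℝ × ℝ | p.1 ≤ p.2}) := by
    rw [Set.disjoint_iff]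
    rintro p ⟨⟨_, h1'⟩, ⟨_, h2'⟩⟩
    simp only [mem_setOf_eq] at h1' h2'
    exact absurd h2' (not_le.mpr h1')
  have hunion : (sq ∩ {p : ℝ × ℝ | p.2 < p.1}) ∪ (sq ∩ {p : ℝ × ℝ | p.1 ≤ p.2}) = sq := by
    rw [← Set.inter_union_distrib_left]
    have : {p : ℝ × ℝ | p.2 < p.1} ∪ {p : ℝ × ℝ | p.1 ≤ p.2} = Set.univ := by
      ext p
      simp only [mem_union, mem_setOf_eq, mem_univ, iff_true]
      exact (lt_or_ge p.2 p.1).imp id id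
    rw [this, Set.inter_univ]
  have := measure_union (μ := μ.prod ρ) hdisj (hsq.inter hle)
  rw [hunion] at this
  rw [← h1, ← h2, ← this, hsq_def, Measure.prod_prod]

lemma stieltjes_restrict_finite (F : StieltjesFunction ℝ) (a b : ℝ) :
    IsFiniteMeasure (F.measure.restrict (Set.Ioc a b)) := by
  constructor
  rw [Measure.restrict_apply_univ, F.measure_Ioc]
  exact ENNReal.ofReal_lt_top

lemma stieltjes_identity (F : StieltjesFunction ℝ) (hF0 : F 0 = 0) {t : ℝ} (ht : 0 ≤ t)
    {M : ℝ → ℝ} (hM : Monotone M) (hM0 : ∀ x, 0 ≤ M x) :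
    (∫⁻ x in Set.Ioc (0:ℝ) t, ENNReal.ofReal (Function.leftLim M x) ∂F.measure)
      + (∫⁻ y in Set.Ioc (0:ℝ) t, ENNReal.ofReal (F y) ∂(hM.stieltjesFunction).measure)
      = ENNReal.ofReal (F t) * ((hM.stieltjesFunction).measure (Set.Ioc 0 t)
          + ENNReal.ofReal (Function.rightLim M 0)) := by
  set N := hM.stieltjesFunction with hN
  have hNfun : ∀ x, N x = Function.rightLim M x := fun x => hM.stieltjesFunction_eq x
  haveI : IsFiniteMeasure (F.measure.restrict (Set.Ioc (0:ℝ) t)) :=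
    stieltjes_restrict_finite F 0 t
  haveI : IsFiniteMeasure (N.measure.restrict (Set.Ioc (0:ℝ) t)) :=
    stieltjes_restrict_finite N 0 t
  have hfub := fubini_box (F.measure.restrict (Set.Ioc (0:ℝ) t))
    (N.measure.restrict (Set.Ioc (0:ℝ) t)) t
  rw [Measure.restrict_restrict measurableSet_Ioc, Set.inter_self] at hfub
  -- simplify the measures of sets appearing in hfub
  have hres1 : ∀ x ∈ Set.Ioc (0:ℝ) t,
      (N.measure.restrict (Set.Ioc (0:ℝ) t)) (Set.Ioo 0 x) = N.measure (Set.Ioo 0 x) := by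
    intro x hx
    rw [Measure.restrict_apply measurableSet_Ioo, Set.inter_eq_left.mpr]
    exact fun y hy => ⟨hy.1, hy.2.le.trans hx.2⟩
  have hres2 : ∀ y ∈ Set.Ioc (0:ℝ) t,
      (F.measure.restrict (Set.Ioc (0:ℝ) t)) (Set.Ioc 0 y) = ENNReal.ofReal (F y) := by
    intro y hy
    have hsub : Set.Ioc (0:ℝ) y ⊆ Set.Ioc (0:ℝ) t := fun z hz => ⟨hz.1, hz.2.trans hy.2⟩
    rw [Measure.restrict_apply measurableSet_Ioc, Set.inter_eq_left.mpr hsub,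
      F.measure_Ioc, hF0, sub_zero]
  have hres3 : (F.measure.restrict (Set.Ioc (0:ℝ) t)) (Set.Ioc 0 t) = ENNReal.ofReal (F t) := by
    rw [Measure.restrict_apply measurableSet_Ioc, Set.inter_self, F.measure_Ioc, hF0, sub_zero]
  have hres4 : (N.measure.restrict (Set.Ioc (0:ℝ) t)) (Set.Ioc 0 t) = N.measure (Set.Ioc 0 t) := by
    rw [Measure.restrict_apply measurableSet_Ioc, Set.inter_self]
  rw [setLIntegral_congr_fun measurableSet_Ioc hres1] at hfub
  have hfub2 : (∫⁻ x in Set.Ioc (0:ℝ) t, N.measure (Set.Ioo 0 x) ∂F.measure)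
      + (∫⁻ y in Set.Ioc (0:ℝ) t, ENNReal.ofReal (F y)
          ∂(N.measure.restrict (Set.Ioc (0:ℝ) t))) = ENNReal.ofReal (F t) * N.measure (Set.Ioc 0 t) := by
    rw [← hres3, ← hres4]
    rw [← setLIntegral_congr_fun measurableSet_Ioc hres2]
    exact hfub
  rw [Measure.restrict_restrict measurableSet_Ioc, Set.inter_self] at hfub2
  -- rewrite the first integrand
  have hc00 : 0 ≤ Function.rightLim M 0 := le_trans (hM0 0) (hM.le_rightLim le_rfl)
  have hint1 : ∀ x ∈ Set.Ioc (0:ℝ) t,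
      ENNReal.ofReal (Function.leftLim M x)
        = N.measure (Set.Ioo 0 x) + ENNReal.ofReal (Function.rightLim M 0) := by
    intro x hx
    have hmeas : N.measure (Set.Ioo 0 x)
        = ENNReal.ofReal (Function.leftLim M x - Function.rightLim M 0) := by
      have hco : (⇑N : ℝ → ℝ) = Function.rightLim M := funext hNfun
      rw [N.measure_Ioo, hco, leftLim_rightLim_eq hM]
    have hge : Function.rightLim M 0 ≤ Function.leftLim M x := hM.rightLim_le_leftLim hx.1
    rw [hmeas, ← ENNReal.ofReal_add (by linarith) hc00]
    congr 1
    ring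
  rw [setLIntegral_congr_fun measurableSet_Ioc hint1,
    lintegral_add_right _ measurable_const, lintegral_const,
    Measure.restrict_apply_univ]
  have hFIoc : F.measure (Set.Ioc 0 t) = ENNReal.ofReal (F t) := by
    rw [F.measure_Ioc, hF0, sub_zero]
  rw [hFIoc, mul_add, ← hfub2]
  ring

lemma mono_piece_est (F1 F2 : StieltjesFunction ℝ) (h10 : F1 0 = 0) (h20 : F2 0 = 0)
    {θ t : ℝ} (ht : t ∈ Set.Icc (0:ℝ) θ) {M : ℝ → ℝ} (hM : Monotone M)
    (hM0 : ∀ x, 0 ≤ M x) {CM : ℝ} (hMC : ∀ x, M x ≤ CM) {D : ℝ}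
    (hD : ∀ s ∈ Set.Icc (0:ℝ) θ, |F1 s - F2 s| ≤ D) :
    |(∫ x in Set.Ioc (0:ℝ) t, Function.leftLim M x ∂F1.measure)
      - ∫ x in Set.Ioc (0:ℝ) t, Function.leftLim M x ∂F2.measure| ≤ 3 * CM * D := by
  have hθ0 : (0:ℝ) ≤ θ := le_trans ht.1 ht.2
  have hD0 : 0 ≤ D := le_trans (abs_nonneg _) (hD 0 ⟨le_rfl, hθ0⟩)
  set N := hM.stieltjesFunction with hN
  have hNfun : ∀ x, N x = Function.rightLim M x := fun x => hM.stieltjesFunction_eq x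
  set c0 := Function.rightLim M 0 with hc0
  have hc00 : 0 ≤ c0 := le_trans (hM0 0) (hM.le_rightLim le_rfl)
  have hc0C : c0 ≤ CM := le_trans (hM.rightLim_le zero_lt_one) (hMC 1)
  set ρR := (N.measure (Set.Ioc 0 t)).toReal with hρR
  have hNIoc : N.measure (Set.Ioc 0 t) = ENNReal.ofReal (N t - N 0) := N.measure_Ioc 0 t
  have hρR0 : 0 ≤ ρR := ENNReal.toReal_nonneg
  have hNmono : N 0 ≤ N t := N.mono ht.1
  have hρRval : ρR = N t - N 0 := by
    rw [hρR, hNIoc, ENNReal.toReal_ofReal (by linarith)]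
  have hρRC : ρR ≤ CM := by
    have h1 : N t ≤ CM := by
      rw [hNfun]
      exact le_trans (hM.rightLim_le (lt_add_one t)) (hMC (t + 1))
    have h2 : 0 ≤ N 0 := by rw [hNfun]; exact le_trans (hM0 0) (hM.le_rightLim le_rfl)
    linarith [hρRval]
  -- lintegral quantities
  set L1 := ∫⁻ x in Set.Ioc (0:ℝ) t, ENNReal.ofReal (Function.leftLim M x) ∂F1.measure with hL1
  set L2 := ∫⁻ x in Set.Ioc (0:ℝ) t, ENNReal.ofReal (Function.leftLim M x) ∂F2.measure with hL2
  set B1 := ∫⁻ y in Set.Ioc (0:ℝ) t, ENNReal.ofReal (F1 y) ∂N.measure with hB1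
  set B2 := ∫⁻ y in Set.Ioc (0:ℝ) t, ENNReal.ofReal (F2 y) ∂N.measure with hB2
  have hid1 := stieltjes_identity F1 h10 ht.1 hM hM0
  have hid2 := stieltjes_identity F2 h20 ht.1 hM hM0
  rw [← hN, ← hL1, ← hB1, ← hc0] at hid1
  rw [← hN, ← hL2, ← hB2, ← hc0] at hid2
  have hRHSne1 : ENNReal.ofReal (F1 t) * (N.measure (Set.Ioc 0 t) + ENNReal.ofReal c0) ≠ ⊤ :=
    ENNReal.mul_ne_top ENNReal.ofReal_ne_top
      (by rw [hNIoc]; exact ENNReal.add_ne_top.mpr ⟨ENNReal.ofReal_ne_top, ENNReal.ofReal_ne_top⟩)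
  have hRHSne2 : ENNReal.ofReal (F2 t) * (N.measure (Set.Ioc 0 t) + ENNReal.ofReal c0) ≠ ⊤ :=
    ENNReal.mul_ne_top ENNReal.ofReal_ne_top
      (by rw [hNIoc]; exact ENNReal.add_ne_top.mpr ⟨ENNReal.ofReal_ne_top, ENNReal.ofReal_ne_top⟩)
  have hsum1 : L1 + B1 ≠ ⊤ := by rw [hid1]; exact hRHSne1
  have hsum2 : L2 + B2 ≠ ⊤ := by rw [hid2]; exact hRHSne2
  have hL1ne : L1 ≠ ⊤ := fun h => hsum1 (by simp [h])
  have hB1ne : B1 ≠ ⊤ := fun h => hsum1 (by simp [h])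
  have hL2ne : L2 ≠ ⊤ := fun h => hsum2 (by simp [h])
  have hB2ne : B2 ≠ ⊤ := fun h => hsum2 (by simp [h])
  have hF1t : 0 ≤ F1 t := h10 ▸ F1.mono ht.1
  have hF2t : 0 ≤ F2 t := h20 ▸ F2.mono ht.1
  have hNne : N.measure (Set.Ioc 0 t) ≠ ⊤ := by rw [hNIoc]; exact ENNReal.ofReal_ne_top
  -- real identities
  have hrid1 : L1.toReal + B1.toReal = F1 t * (ρR + c0) := by
    have := congrArg ENNReal.toReal hid1
    rwa [ENNReal.toReal_add hL1ne hB1ne, ENNReal.toReal_mul, ENNReal.toReal_ofReal hF1t,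
      ENNReal.toReal_add hNne ENNReal.ofReal_ne_top, ENNReal.toReal_ofReal hc00, ← hρR] at this
  have hrid2 : L2.toReal + B2.toReal = F2 t * (ρR + c0) := by
    have := congrArg ENNReal.toReal hid2
    rwa [ENNReal.toReal_add hL2ne hB2ne, ENNReal.toReal_mul, ENNReal.toReal_ofReal hF2t,
      ENNReal.toReal_add hNne ENNReal.ofReal_ne_top, ENNReal.toReal_ofReal hc00, ← hρR] at this
  -- identify real integrals with toReal of lintegrals
  have hllnonneg : ∀ x : ℝ, 0 ≤ Function.leftLim M x :=
    fun x => le_trans (hM0 (x - 1)) (hM.le_leftLim (sub_one_lt x))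
  have hlmeas : Measurable (Function.leftLim M) := (hM.leftLim).measurable
  have hl1 : ∫ x in Set.Ioc (0:ℝ) t, Function.leftLim M x ∂F1.measure = L1.toReal := by
    rw [hL1, integral_eq_lintegral_of_nonneg_ae (ae_of_all _ hllnonneg)
      hlmeas.aestronglyMeasurable]
  have hl2 : ∫ x in Set.Ioc (0:ℝ) t, Function.leftLim M x ∂F2.measure = L2.toReal := by
    rw [hL2, integral_eq_lintegral_of_nonneg_ae (ae_of_all _ hllnonneg)
      hlmeas.aestronglyMeasurable]
  have hb1 : ∫ y in Set.Ioc (0:ℝ) t, F1 y ∂N.measure = B1.toReal := by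
    rw [hB1, integral_eq_lintegral_of_nonneg_ae
      ((ae_restrict_iff' measurableSet_Ioc).mpr
        (ae_of_all _ fun y hy => by simp only [Pi.zero_apply]; rw [← h10]; exact F1.mono hy.1.le))
      F1.mono.measurable.aestronglyMeasurable]
  have hb2 : ∫ y in Set.Ioc (0:ℝ) t, F2 y ∂N.measure = B2.toReal := by
    rw [hB2, integral_eq_lintegral_of_nonneg_ae
      ((ae_restrict_iff' measurableSet_Ioc).mpr
        (ae_of_all _ fun y hy => by simp only [Pi.zero_apply]; rw [← h20]; exact F2.mono hy.1.le))
      F2.mono.measurable.aestronglyMeasurable]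
  -- bound |B1 - B2|
  haveI : IsFiniteMeasure (N.measure.restrict (Set.Ioc (0:ℝ) t)) :=
    stieltjes_restrict_finite N 0 t
  have hint1 : IntegrableOn (fun y => F1 y) (Set.Ioc (0:ℝ) t) N.measure := by
    refine Integrable.mono' (integrable_const (F1 t)) F1.mono.measurable.aestronglyMeasurable ?_
    refine (ae_restrict_iff' measurableSet_Ioc).mpr (ae_of_all _ fun y hy => ?_)
    rw [Real.norm_eq_abs, abs_of_nonneg (show (0:ℝ) ≤ F1 y by rw [← h10]; exact F1.mono hy.1.le)]
    exact F1.mono hy.2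
  have hint2 : IntegrableOn (fun y => F2 y) (Set.Ioc (0:ℝ) t) N.measure := by
    refine Integrable.mono' (integrable_const (F2 t)) F2.mono.measurable.aestronglyMeasurable ?_
    refine (ae_restrict_iff' measurableSet_Ioc).mpr (ae_of_all _ fun y hy => ?_)
    rw [Real.norm_eq_abs, abs_of_nonneg (show (0:ℝ) ≤ F2 y by rw [← h20]; exact F2.mono hy.1.le)]
    exact F2.mono hy.2
  have hbdiff : |B1.toReal - B2.toReal| ≤ D * ρR := by
    rw [← hb1, ← hb2, ← integral_sub hint1 hint2]
    have hbound : ∀ᵐ y ∂(N.measure.restrict (Set.Ioc (0:ℝ) t)), ‖F1 y - F2 y‖ ≤ D := by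
      refine (ae_restrict_iff' measurableSet_Ioc).mpr (ae_of_all _ fun y hy => ?_)
      rw [Real.norm_eq_abs]
      exact hD y ⟨hy.1.le, hy.2.trans ht.2⟩
    have := norm_integral_le_of_norm_le_const (μ := N.measure.restrict (Set.Ioc (0:ℝ) t)) hbound
    rwa [Real.norm_eq_abs, measureReal_restrict_apply_univ, measureReal_def] at this
  -- final estimate
  rw [hl1, hl2]
  have e1 : L1.toReal - L2.toReal
      = (F1 t - F2 t) * (ρR + c0) - (B1.toReal - B2.toReal) := by
    nlinarith [hrid1, hrid2]
  have habs : |L1.toReal - L2.toReal|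
      ≤ |(F1 t - F2 t) * (ρR + c0)| + |B1.toReal - B2.toReal| := by
    rw [e1, sub_eq_add_neg]
    exact le_trans (abs_add_le _ _) (by rw [abs_neg])
  have hFt : |F1 t - F2 t| ≤ D := hD t ⟨ht.1, ht.2⟩
  have h2 : |(F1 t - F2 t) * (ρR + c0)| = |F1 t - F2 t| * (ρR + c0) := by
    rw [abs_mul, abs_of_nonneg (show (0:ℝ) ≤ ρR + c0 by linarith)]
  nlinarith [abs_nonneg (F1 t - F2 t), habs, hbdiff, hFt, h2]

lemma decomp_lemma {θ ε V : ℝ} (hθ : 0 ≤ θ) (hε : 0 < ε) (w : ℝ → ℝ)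
    (hwll : ∀ s ∈ Set.Ioc (0:ℝ) θ, Tendsto w (𝓝[<] s) (𝓝 (Function.leftLim w s)))
    (hwV : eVariationOn w (Set.Icc (0:ℝ) θ) ≤ ENNReal.ofReal V) :
    ∃ (P Q : ℝ → ℝ) (C : ℝ), Monotone P ∧ Monotone Q
      ∧ (∀ x, 0 ≤ P x ∧ P x ≤ C) ∧ (∀ x, 0 ≤ Q x ∧ Q x ≤ C)
      ∧ ∀ s ∈ Set.Ioc (0:ℝ) θ,
          (max (Function.leftLim w s) ε)⁻¹ = Function.leftLim P s - Function.leftLim Q s := by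
  classical
  set clamp : ℝ → ℝ := fun x => max 0 (min x θ) with hclamp
  have hclmono : Monotone clamp := fun a b hab =>
    max_le_max le_rfl (min_le_min hab le_rfl)
  have hclmem : ∀ x, clamp x ∈ Set.Icc (0:ℝ) θ := fun x =>
    ⟨le_max_left _ _, max_le hθ (min_le_right _ _)⟩
  have hclid : ∀ x ∈ Set.Ioo (0:ℝ) θ, clamp x = x := fun x hx => by
    rw [hclamp]
    simp only [min_eq_left hx.2.le, max_eq_right hx.1.le]
  have hclidem : ∀ x, clamp (clamp x) = clamp x := fun x => by
    have h := hclmem x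
    rw [hclamp]
    show max 0 (min (max 0 (min x θ)) θ) = max 0 (min x θ)
    rw [min_eq_left (show max 0 (min x θ) ≤ θ from (hclmem x).2),
      max_eq_right (show (0:ℝ) ≤ max 0 (min x θ) from (hclmem x).1)]
  set G : ℝ → ℝ := fun x => w (clamp x) with hG
  set φ : ℝ → ℝ := fun x => (max x ε)⁻¹ with hφ
  set H : ℝ → ℝ := fun x => φ (G x) with hH
  -- variation bounds
  have hGvar : eVariationOn G Set.univ ≤ ENNReal.ofReal V := by
    refine le_trans ?_ hwV
    exact eVariationOn.comp_le_of_monotoneOn w clamp (hclmono.monotoneOn _)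
      (fun x _ => hclmem x)
  have hφlipW : LipschitzWith (⟨ε⁻¹ * ε⁻¹, by positivity⟩ : NNReal) φ :=
    LipschitzWith.of_dist_le_mul fun a b => by
      rw [Real.dist_eq, Real.dist_eq]
      exact phi_abs_sub hε a b
  have hHvar : eVariationOn H Set.univ ≠ ⊤ := by
    have := (hφlipW.lipschitzOnWith (s := Set.univ)).comp_eVariationOn_le
      (g := G) (s := Set.univ) (Set.mapsTo_univ _ _)
    refine ne_top_of_le_ne_top ?_ this
    exact ENNReal.mul_ne_top ENNReal.coe_ne_top (ne_top_of_le_ne_top ENNReal.ofReal_ne_top hGvar)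
  have hHlbv : LocallyBoundedVariationOn H Set.univ := by
    intro a b _ _
    exact ne_top_of_le_ne_top hHvar (eVariationOn.mono H (Set.inter_subset_left))
  obtain ⟨p, q, hp, hq, hpq⟩ := hHlbv.exists_monotoneOn_sub_monotoneOn
  rw [monotoneOn_univ] at hp hq
  have hpq' : ∀ x, H x = p x - q x := fun x => by rw [hpq]; rfl
  set c0 : ℝ := |p 0| + |q 0| with hc0
  set P : ℝ → ℝ := fun x => p (clamp x) + c0 with hP
  set Q : ℝ → ℝ := fun x => q (clamp x) + c0 with hQ
  have hPmono : Monotone P := fun a b hab => by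
    simp only [hP]
    exact add_le_add (hp (hclmono hab)) le_rfl
  have hQmono : Monotone Q := fun a b hab => by
    simp only [hQ]
    exact add_le_add (hq (hclmono hab)) le_rfl
  refine ⟨P, Q, max (p θ + c0) (q θ + c0), hPmono, hQmono, ?_, ?_, ?_⟩
  · intro x
    constructor
    · have h1 : p 0 ≤ p (clamp x) := hp (hclmem x).1
      have : -c0 ≤ p 0 := by
        rw [hc0]
        have := abs_nonneg (q 0)
        have := neg_abs_le (p 0)
        linarith
      simp only [hP]; linarith
    · have h2 : p (clamp x) ≤ p θ := hp (hclmem x).2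
      exact le_trans (by simp only [hP]; linarith) (le_max_left _ _)
  · intro x
    constructor
    · have h1 : q 0 ≤ q (clamp x) := hq (hclmem x).1
      have : -c0 ≤ q 0 := by
        rw [hc0]
        have := abs_nonneg (p 0)
        have := neg_abs_le (q 0)
        linarith
      simp only [hQ]; linarith
    · have h2 : q (clamp x) ≤ q θ := hq (hclmem x).2
      exact le_trans (by simp only [hQ]; linarith) (le_max_right _ _)
  · intro s hs
    have hPQH : ∀ x, P x - Q x = H x := fun x => by
      simp only [hP, hQ]
      have h1 : H (clamp x) = p (clamp x) - q (clamp x) := hpq' (clamp x)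
      have h2 : H (clamp x) = H x := by
        simp only [hH, hG]
        rw [hclidem x]
      linarith
    -- limits
    have hPl : Tendsto P (𝓝[<] s) (𝓝 (Function.leftLim P s)) := hPmono.tendsto_leftLim s
    have hQl : Tendsto Q (𝓝[<] s) (𝓝 (Function.leftLim Q s)) := hQmono.tendsto_leftLim s
    have hHl : Tendsto H (𝓝[<] s) (𝓝 (Function.leftLim P s - Function.leftLim Q s)) := by
      have := hPl.sub hQl
      refine this.congr fun x => hPQH x
    have hHl2 : Tendsto H (𝓝[<] s) (𝓝 ((max (Function.leftLim w s) ε)⁻¹)) := by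
      have hGw : G =ᶠ[𝓝[<] s] w := by
        filter_upwards [Ioo_mem_nhdsLT_of_mem (show s ∈ Set.Ioc (0:ℝ) s from ⟨hs.1, le_rfl⟩)]
          with x hx
        simp only [hG]
        rw [hclid x ⟨hx.1, lt_of_lt_of_le hx.2 hs.2⟩]
      have hwten : Tendsto G (𝓝[<] s) (𝓝 (Function.leftLim w s)) :=
        (hwll s hs).congr' hGw.symm
      exact ((phi_continuous hε).continuousAt.tendsto.comp hwten : _)
    exact (tendsto_nhds_unique hHl2 hHl)

lemma abs_sub_le_abs_add_abs (a b : ℝ) : |a - b| ≤ |a| + |b| := by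
  rw [sub_eq_add_neg]
  exact (abs_add_le _ _).trans (by rw [abs_neg])

lemma var_dist_le {w : ℝ → ℝ} {θ V : ℝ} (hV : 0 ≤ V)
    (hwV : eVariationOn w (Set.Icc (0:ℝ) θ) ≤ ENNReal.ofReal V) {x y : ℝ}
    (hx : x ∈ Set.Icc (0:ℝ) θ) (hy : y ∈ Set.Icc (0:ℝ) θ) : |w x - w y| ≤ V := by
  have h := le_trans (eVariationOn.edist_le w hx hy) hwV
  rw [edist_dist] at h
  have h2 := (ENNReal.ofReal_le_ofReal_iff hV).mp h
  rwa [Real.dist_eq] at h2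

lemma integrableOn_leftLim {P : ℝ → ℝ} (hP : Monotone P) {C : ℝ}
    (hb : ∀ x, 0 ≤ P x ∧ P x ≤ C) (F : StieltjesFunction ℝ) (a b : ℝ) :
    IntegrableOn (Function.leftLim P) (Set.Ioc a b) F.measure := by
  haveI := stieltjes_restrict_finite F a b
  refine Integrable.mono' (integrable_const C) (hP.leftLim.measurable).aestronglyMeasurable
    (ae_of_all _ fun x => ?_)
  rw [Real.norm_eq_abs, abs_of_nonneg (le_trans (hb (x-1)).1 (hP.le_leftLim (sub_one_lt x)))]
  exact le_trans (hP.leftLim_le le_rfl) (hb x).2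

/-- deterministic stability of the ε-perturbed integral functional: if the
nondecreasing right-continuous functions `fn n` (with `fn n 0 = f 0 = 0`, values in `[0,∞)`
on `[0,θ]`) converge uniformly on `[0,θ]` to `f`, and the nonnegative regulated functions
`gn n` (right-continuous with left limits on `[0,θ]`, total variation at most `V`) converge
uniformly on `[0,θ]` to `g`, then
`sup_{t ∈ [0,θ]} |∫_{(0,t]} (gn n(s−) ∨ ε)⁻¹ dfn n(s) − ∫_{(0,t]} (g(s−) ∨ ε)⁻¹ df(s)| → 0`. -/
theorem eps_perturbed_integral_stability
    (θ ε V : ℝ) (hθ : 0 < θ) (hε : 0 < ε) (hV : 0 ≤ V)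
    (fn : ℕ → StieltjesFunction ℝ) (f : StieltjesFunction ℝ)
    (hfn0 : ∀ n, fn n 0 = 0) (hf0 : f 0 = 0)
    (hfnn : ∀ n, ∀ t ∈ Set.Icc (0:ℝ) θ, 0 ≤ fn n t)
    (hfnng : ∀ t ∈ Set.Icc (0:ℝ) θ, 0 ≤ f t)
    (hfconv : Tendsto (fun n => ⨆ t : Set.Icc (0:ℝ) θ, |fn n ↑t - f ↑t|) atTop (𝓝 0))
    (gn : ℕ → ℝ → ℝ) (g : ℝ → ℝ)
    (hgnn : ∀ n, ∀ t ∈ Set.Icc (0:ℝ) θ, 0 ≤ gn n t)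
    (hgn0 : ∀ t ∈ Set.Icc (0:ℝ) θ, 0 ≤ g t)
    (hgnrc : ∀ n, ∀ s ∈ Set.Ico (0:ℝ) θ, ContinuousWithinAt (gn n) (Set.Ici s) s)
    (hgrc : ∀ s ∈ Set.Ico (0:ℝ) θ, ContinuousWithinAt g (Set.Ici s) s)
    (hgnll : ∀ n, ∀ s ∈ Set.Ioc (0:ℝ) θ,
      Tendsto (gn n) (𝓝[<] s) (𝓝 (Function.leftLim (gn n) s)))
    (hgll : ∀ s ∈ Set.Ioc (0:ℝ) θ,
      Tendsto g (𝓝[<] s) (𝓝 (Function.leftLim g s)))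
    (hgnV : ∀ n, eVariationOn (gn n) (Set.Icc (0:ℝ) θ) ≤ ENNReal.ofReal V)
    (hgV : eVariationOn g (Set.Icc (0:ℝ) θ) ≤ ENNReal.ofReal V)
    (hgconv : Tendsto (fun n => ⨆ t : Set.Icc (0:ℝ) θ, |gn n ↑t - g ↑t|) atTop (𝓝 0)) :
    Tendsto
      (fun n => ⨆ t : Set.Icc (0:ℝ) θ,
        |(∫ s in Set.Ioc (0:ℝ) (↑t : ℝ), (max (Function.leftLim (gn n) s) ε)⁻¹
            ∂(fn n).measure)
          - ∫ s in Set.Ioc (0:ℝ) (↑t : ℝ), (max (Function.leftLim g s) ε)⁻¹ ∂f.measure|)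
      atTop (𝓝 0) := by
    classical
  have h0Icc : (0:ℝ) ∈ Set.Icc (0:ℝ) θ := ⟨le_rfl, hθ.le⟩
  have hθIcc : θ ∈ Set.Icc (0:ℝ) θ := ⟨hθ.le, le_rfl⟩
  haveI : Nonempty (Set.Icc (0:ℝ) θ) := ⟨⟨0, h0Icc⟩⟩
  set D : ℕ → ℝ := fun n => ⨆ t : Set.Icc (0:ℝ) θ, |fn n ↑t - f ↑t| with hDdef
  set δ : ℕ → ℝ := fun n => ⨆ t : Set.Icc (0:ℝ) θ, |gn n ↑t - g ↑t| with hδdef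
  -- pointwise access to the sups
  have hDmem : ∀ n, ∀ s ∈ Set.Icc (0:ℝ) θ, |fn n s - f s| ≤ D n := by
    intro n s hs
    have hbdd : BddAbove (range fun t : Set.Icc (0:ℝ) θ => |fn n ↑t - f ↑t|) := by
      refine ⟨fn n θ + f θ, ?_⟩
      rintro x ⟨t, rfl⟩
      refine le_trans (abs_sub_le_abs_add_abs _ _) ?_
      rw [abs_of_nonneg (hfnn n t t.2), abs_of_nonneg (hfnng t t.2)]
      exact add_le_add ((fn n).mono t.2.2) (f.mono t.2.2)
    exact le_ciSup hbdd (⟨s, hs⟩ : Set.Icc (0:ℝ) θ)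
  have hδmem : ∀ n, ∀ s ∈ Set.Icc (0:ℝ) θ, |gn n s - g s| ≤ δ n := by
    intro n s hs
    have hbdd : BddAbove (range fun t : Set.Icc (0:ℝ) θ => |gn n ↑t - g ↑t|) := by
      refine ⟨V + |gn n 0 - g 0| + V, ?_⟩
      rintro x ⟨t, rfl⟩
      calc |gn n ↑t - g ↑t|
          ≤ |gn n ↑t - gn n 0| + |gn n 0 - g ↑t| := abs_sub_le _ _ _
        _ ≤ |gn n ↑t - gn n 0| + (|gn n 0 - g 0| + |g 0 - g ↑t|) :=
            add_le_add le_rfl (abs_sub_le _ _ _)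
        _ ≤ V + (|gn n 0 - g 0| + V) :=
            add_le_add (var_dist_le hV (hgnV n) t.2 h0Icc)
              (add_le_add le_rfl (var_dist_le hV hgV h0Icc t.2))
        _ = V + |gn n 0 - g 0| + V := by ring
    exact le_ciSup hbdd (⟨s, hs⟩ : Set.Icc (0:ℝ) θ)
  have hD0 : ∀ n, 0 ≤ D n := fun n => le_trans (abs_nonneg _) (hDmem n 0 h0Icc)
  have hδ0 : ∀ n, 0 ≤ δ n := fun n => le_trans (abs_nonneg _) (hδmem n 0 h0Icc)
  -- decompositions
  obtain ⟨P, Q, C, hPmono, hQmono, hPb, hQb, hrep⟩ := decomp_lemma hθ.le hε g hgll hgV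
  have hdn : ∀ n, ∃ (Pn Qn : ℝ → ℝ) (Cn : ℝ), Monotone Pn ∧ Monotone Qn
      ∧ (∀ x, 0 ≤ Pn x ∧ Pn x ≤ Cn) ∧ (∀ x, 0 ≤ Qn x ∧ Qn x ≤ Cn)
      ∧ ∀ s ∈ Set.Ioc (0:ℝ) θ,
          (max (Function.leftLim (gn n) s) ε)⁻¹
            = Function.leftLim Pn s - Function.leftLim Qn s :=
    fun n => decomp_lemma hθ.le hε (gn n) (hgnll n) (hgnV n)
  choose Pn Qn Cn hPnmono hQnmono hPnb hQnb hrepn using hdn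
  -- leftLim difference bound
  have hlldiff : ∀ n, ∀ s ∈ Set.Ioc (0:ℝ) θ,
      |Function.leftLim (gn n) s - Function.leftLim g s| ≤ δ n := by
    intro n s hs
    have h1 := ((hgnll n s hs).sub (hgll s hs)).abs
    refine le_of_tendsto h1 ?_
    filter_upwards [Ioo_mem_nhdsLT_of_mem (show s ∈ Set.Ioc (0:ℝ) s from ⟨hs.1, le_rfl⟩)]
      with y hy
    exact hδmem n y ⟨hy.1.le, hy.2.le.trans hs.2⟩
  -- the key uniform estimate
  set bound : ℕ → ℝ := fun n => ε⁻¹ * ε⁻¹ * δ n * (f θ + D n) + (3 * C * D n + 3 * C * D n)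
    with hbound
  have key : ∀ n, ∀ t : Set.Icc (0:ℝ) θ,
      |(∫ s in Set.Ioc (0:ℝ) (↑t : ℝ), (max (Function.leftLim (gn n) s) ε)⁻¹
          ∂(fn n).measure)
        - ∫ s in Set.Ioc (0:ℝ) (↑t : ℝ), (max (Function.leftLim g s) ε)⁻¹ ∂f.measure|
      ≤ bound n := by
    intro n t
    obtain ⟨t, ht⟩ := t
    simp only
    have hsub : Set.Ioc (0:ℝ) t ⊆ Set.Ioc (0:ℝ) θ := fun y hy => ⟨hy.1, hy.2.trans ht.2⟩
    -- rewrite integrals via the decompositions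
    have hIa : (∫ s in Set.Ioc (0:ℝ) t, (max (Function.leftLim (gn n) s) ε)⁻¹ ∂(fn n).measure)
        = ∫ s in Set.Ioc (0:ℝ) t,
            (Function.leftLim (Pn n) s - Function.leftLim (Qn n) s) ∂(fn n).measure := by
      refine setIntegral_congr_fun measurableSet_Ioc fun s hs => ?_
      exact hrepn n s (hsub hs)
    have hIb : (∫ s in Set.Ioc (0:ℝ) t, (max (Function.leftLim g s) ε)⁻¹ ∂f.measure)
        = ∫ s in Set.Ioc (0:ℝ) t, (Function.leftLim P s - Function.leftLim Q s) ∂f.measure := by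
      refine setIntegral_congr_fun measurableSet_Ioc fun s hs => ?_
      exact hrep s (hsub hs)
    have hI2 : (∫ s in Set.Ioc (0:ℝ) t,
          (Function.leftLim P s - Function.leftLim Q s) ∂(fn n).measure)
        = ∫ s in Set.Ioc (0:ℝ) t, (max (Function.leftLim g s) ε)⁻¹ ∂(fn n).measure := by
      refine setIntegral_congr_fun measurableSet_Ioc fun s hs => ?_
      exact (hrep s (hsub hs)).symm
    -- integrabilities
    have iPn := integrableOn_leftLim (hPnmono n) (hPnb n) (fn n) 0 t
    have iQn := integrableOn_leftLim (hQnmono n) (hQnb n) (fn n) 0 t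
    have iPf1 := integrableOn_leftLim hPmono hPb (fn n) 0 t
    have iQf1 := integrableOn_leftLim hQmono hQb (fn n) 0 t
    have iPf2 := integrableOn_leftLim hPmono hPb f 0 t
    have iQf2 := integrableOn_leftLim hQmono hQb f 0 t
    -- term 1
    haveI := stieltjes_restrict_finite (fn n) 0 t
    have hterm1 : |(∫ s in Set.Ioc (0:ℝ) t,
          (Function.leftLim (Pn n) s - Function.leftLim (Qn n) s) ∂(fn n).measure)
        - ∫ s in Set.Ioc (0:ℝ) t,
            (Function.leftLim P s - Function.leftLim Q s) ∂(fn n).measure|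
        ≤ ε⁻¹ * ε⁻¹ * δ n * (f θ + D n) := by
      have iAn : IntegrableOn
          (fun s => Function.leftLim (Pn n) s - Function.leftLim (Qn n) s)
          (Set.Ioc (0:ℝ) t) (fn n).measure := iPn.sub iQn
      have iBn : IntegrableOn
          (fun s => Function.leftLim P s - Function.leftLim Q s)
          (Set.Ioc (0:ℝ) t) (fn n).measure := iPf1.sub iQf1
      rw [← integral_sub iAn iBn]
      have hptbd : ∀ᵐ s ∂((fn n).measure.restrict (Set.Ioc (0:ℝ) t)),
          ‖(Function.leftLim (Pn n) s - Function.leftLim (Qn n) s)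
            - (Function.leftLim P s - Function.leftLim Q s)‖ ≤ ε⁻¹ * ε⁻¹ * δ n := by
        refine (ae_restrict_iff' measurableSet_Ioc).mpr (ae_of_all _ fun s hs => ?_)
        rw [Real.norm_eq_abs, ← hrepn n s (hsub hs), ← hrep s (hsub hs)]
        refine le_trans (phi_abs_sub hε _ _) ?_
        exact mul_le_mul_of_nonneg_left (hlldiff n s (hsub hs)) (by positivity)
      have hni := norm_integral_le_of_norm_le_const
        (μ := (fn n).measure.restrict (Set.Ioc (0:ℝ) t)) hptbd
      rw [Real.norm_eq_abs, measureReal_restrict_apply_univ, measureReal_def] at hni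
      refine le_trans hni ?_
      have hμ : ((fn n).measure (Set.Ioc 0 t)).toReal = fn n t := by
        rw [(fn n).measure_Ioc, hfn0 n, sub_zero,
          ENNReal.toReal_ofReal (hfnn n t ht)]
      have hμle : ((fn n).measure (Set.Ioc 0 t)).toReal ≤ f θ + D n := by
        rw [hμ]
        have h1 : fn n t ≤ fn n θ := (fn n).mono ht.2
        have h2 : fn n θ - f θ ≤ |fn n θ - f θ| := le_abs_self _
        have h3 := hDmem n θ hθIcc
        linarith
      exact mul_le_mul_of_nonneg_left hμle
        (mul_nonneg (mul_nonneg (inv_nonneg.mpr hε.le) (inv_nonneg.mpr hε.le)) (hδ0 n))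
    -- term 2
    have hterm2P := mono_piece_est (fn n) f (hfn0 n) hf0 ht hPmono
      (fun x => (hPb x).1) (fun x => (hPb x).2) (hDmem n)
    have hterm2Q := mono_piece_est (fn n) f (hfn0 n) hf0 ht hQmono
      (fun x => (hQb x).1) (fun x => (hQb x).2) (hDmem n)
    -- combine
    rw [hIa, hIb]
    have hsplit1 : (∫ s in Set.Ioc (0:ℝ) t,
          (Function.leftLim P s - Function.leftLim Q s) ∂(fn n).measure)
        = (∫ s in Set.Ioc (0:ℝ) t, Function.leftLim P s ∂(fn n).measure)
          - ∫ s in Set.Ioc (0:ℝ) t, Function.leftLim Q s ∂(fn n).measure :=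
      integral_sub iPf1 iQf1
    have hsplit2 : (∫ s in Set.Ioc (0:ℝ) t,
          (Function.leftLim P s - Function.leftLim Q s) ∂f.measure)
        = (∫ s in Set.Ioc (0:ℝ) t, Function.leftLim P s ∂f.measure)
          - ∫ s in Set.Ioc (0:ℝ) t, Function.leftLim Q s ∂f.measure :=
      integral_sub iPf2 iQf2
    set A := ∫ s in Set.Ioc (0:ℝ) t,
      (Function.leftLim (Pn n) s - Function.leftLim (Qn n) s) ∂(fn n).measure
    set B1 := ∫ s in Set.Ioc (0:ℝ) t,
      (Function.leftLim P s - Function.leftLim Q s) ∂(fn n).measure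
    set B2 := ∫ s in Set.Ioc (0:ℝ) t,
      (Function.leftLim P s - Function.leftLim Q s) ∂f.measure
    have htri : |A - B2| ≤ |A - B1| + |B1 - B2| := abs_sub_le _ _ _
    refine le_trans htri ?_
    rw [hbound]
    have hB1B2 : |B1 - B2| ≤ 3 * C * D n + 3 * C * D n := by
      have : B1 - B2
          = ((∫ s in Set.Ioc (0:ℝ) t, Function.leftLim P s ∂(fn n).measure)
              - ∫ s in Set.Ioc (0:ℝ) t, Function.leftLim P s ∂f.measure)
            - ((∫ s in Set.Ioc (0:ℝ) t, Function.leftLim Q s ∂(fn n).measure)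
              - ∫ s in Set.Ioc (0:ℝ) t, Function.leftLim Q s ∂f.measure) := by
        rw [hsplit1, hsplit2]; ring
      rw [this]
      refine le_trans (abs_sub_le_abs_add_abs _ _) (add_le_add hterm2P hterm2Q)
    exact add_le_add hterm1 hB1B2
  -- conclusion
  have hboundto : Tendsto bound atTop (𝓝 0) := by
    rw [hbound]
    have h1 : Tendsto (fun n => ε⁻¹ * ε⁻¹ * δ n * (f θ + D n)
        + (3 * C * D n + 3 * C * D n)) atTop
        (𝓝 (ε⁻¹ * ε⁻¹ * 0 * (f θ + 0) + (3 * C * 0 + 3 * C * 0))) := by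
      refine Tendsto.add ?_ (Tendsto.add ?_ ?_)
      · exact ((tendsto_const_nhds.mul hgconv).mul (tendsto_const_nhds.add hfconv))
      · exact tendsto_const_nhds.mul hfconv
      · exact tendsto_const_nhds.mul hfconv
    simpa using h1
  refine squeeze_zero (fun n => ?_) (fun n => ?_) hboundto
  · have hbdd : BddAbove (range fun t : Set.Icc (0:ℝ) θ =>
        |(∫ s in Set.Ioc (0:ℝ) (↑t : ℝ), (max (Function.leftLim (gn n) s) ε)⁻¹
            ∂(fn n).measure)
          - ∫ s in Set.Ioc (0:ℝ) (↑t : ℝ), (max (Function.leftLim g s) ε)⁻¹ ∂f.measure|) := by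
      refine ⟨bound n, ?_⟩
      rintro x ⟨t, rfl⟩
      exact key n t
    exact le_trans (abs_nonneg _) (le_ciSup hbdd (⟨0, h0Icc⟩ : Set.Icc (0:ℝ) θ))
  · exact ciSup_le (key n)
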